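/- Let n ≥ 1 and let k, k' ∈ ZMod n be such that k - k' is a unit of ZMod n. Then there exists a map F on functions G × G → ℂ that is a finite composition of the operators S, T and T⁻¹, such that F (Z k) = Z k' and F (Z k') = Z k; i.e. two ℤ_n×ℤ_n SPT phases whose levels differ by an integer coprime to n are exchanged by a duality operation built from gauging and SPT stacking. (An explicit choice is F = T^{k} ∘ (T^{d-1} ∘ S ∘ T ∘ S ∘ T⁻¹ ∘ S) ∘ T^{-k} with d = k' - k.) -/

import Mathlib

/-!
Torus partition functions of (1+1)d theories with ℤ_n×ℤ_n symmetry,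
modeled as functions `GG n × GG n → ℂ` where `GG n := ZMod n × ZMod n`
records the holonomies of each ℤ_n background gauge field around the
two cycles of the torus.
-/

noncomputable section

/-- The holonomy group of one ℤ_n background gauge field on the torus. -/
abbrev GG (n : ℕ) := ZMod n × ZMod n

/-- The intersection pairing `ε a b = a₁ b₂ - a₂ b₁`. -/
def epsPair {n : ℕ} (a b : GG n) : ZMod n := a.1 * b.2 - a.2 * b.1

/-- The character `e x = exp(2πi x.val / n)`. -/
def eChar (n : ℕ) (x : ZMod n) : ℂ :=
  Complex.exp (2 * Real.pi * Complex.I * (x.val : ℂ) / n)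

/-- The gauging operation `S` on torus partition functions. -/
def gaugeS (n : ℕ) [NeZero n] (f : GG n × GG n → ℂ) : GG n × GG n → ℂ :=
  fun P => (n : ℂ)⁻¹ * (n : ℂ)⁻¹ *
    ∑ a : GG n, ∑ b : GG n, f (a, b) * eChar n (epsPair a P.2 + epsPair b P.1)

/-- The SPT-stacking operation `T` on torus partition functions. -/
def stackT (n : ℕ) (f : GG n × GG n → ℂ) : GG n × GG n → ℂ :=
  fun P => f P * eChar n (epsPair P.1 P.2)

/-- The inverse SPT-stacking operation `T⁻¹` on torus partition functions. -/
def stackTinv (n : ℕ) (f : GG n × GG n → ℂ) : GG n × GG n → ℂ :=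
  fun P => f P * eChar n (-(epsPair P.1 P.2))

/-- The torus partition function of the level-`k` ℤ_n×ℤ_n SPT phase. -/
def Zspt (n : ℕ) (k : ZMod n) : GG n × GG n → ℂ :=
  fun P => eChar n (k * epsPair P.1 P.2)

/-- `IsManip n F` holds when `F` is a finite composition of the gauging
operation `S`, the SPT-stacking operation `T`, and its inverse `T⁻¹`. -/
inductive IsManip (n : ℕ) [NeZero n] :
    ((GG n × GG n → ℂ) → (GG n × GG n → ℂ)) → Prop
  | id : IsManip n id
  | comp_S {F} : IsManip n F → IsManip n (gaugeS n ∘ F)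
  | comp_T {F} : IsManip n F → IsManip n (stackT n ∘ F)
  | comp_Tinv {F} : IsManip n F → IsManip n (stackTinv n ∘ F)

lemma eChar_eq_pow (n : ℕ) [NeZero n] (x : ZMod n) :
    eChar n x = Complex.exp (2 * Real.pi * Complex.I / n) ^ x.val := by
  rw [← Complex.exp_nat_mul]
  unfold eChar
  congr 1
  ring

lemma eChar_zero (n : ℕ) [NeZero n] : eChar n 0 = 1 := by
  simp [eChar]

lemma prim (n : ℕ) [NeZero n] :
    IsPrimitiveRoot (Complex.exp (2 * Real.pi * Complex.I / n)) n :=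
  Complex.isPrimitiveRoot_exp n (NeZero.ne n)

lemma eChar_add (n : ℕ) [NeZero n] (x y : ZMod n) :
    eChar n (x + y) = eChar n x * eChar n y := by
  set z := Complex.exp (2 * Real.pi * Complex.I / n) with hz
  have hzn : z ^ n = 1 := (prim n).pow_eq_one
  rw [eChar_eq_pow, eChar_eq_pow, eChar_eq_pow, ← pow_add, ZMod.val_add]
  conv_rhs => rw [← Nat.mod_add_div (x.val + y.val) n]
  rw [pow_add, pow_mul, hzn, one_pow, mul_one]

lemma eChar_ne_one (n : ℕ) [NeZero n] {c : ZMod n} (hc : c ≠ 0) : eChar n c ≠ 1 := by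
  rw [eChar_eq_pow]
  exact (prim n).pow_ne_one_of_pos_of_lt (ZMod.val_pos.mpr hc).ne' (ZMod.val_lt c)

lemma eChar_sum (n : ℕ) [NeZero n] (c : ZMod n) :
    ∑ x : ZMod n, eChar n (x * c) = if c = 0 then (n : ℂ) else 0 := by
  split_ifs with hc
  · subst hc
    simp [eChar_zero, ZMod.card]
  · have key : (∑ x : ZMod n, eChar n (x * c)) * eChar n c
        = ∑ x : ZMod n, eChar n (x * c) := by
      rw [Finset.sum_mul]
      have h : ∀ x : ZMod n, eChar n (x * c) * eChar n c = eChar n ((x + 1) * c) := by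
        intro x
        rw [← eChar_add]
        congr 1
        ring
      simp_rw [h]
      exact Fintype.sum_equiv (Equiv.addRight 1) _ _ (fun x => rfl)
    have h0 : (∑ x : ZMod n, eChar n (x * c)) * (eChar n c - 1) = 0 := by
      linear_combination key
    rcases mul_eq_zero.mp h0 with h | h
    · exact h
    · exact absurd (by linear_combination h) (eChar_ne_one n hc)

lemma eCharG_sum (n : ℕ) [NeZero n] (c : GG n) :
    ∑ a : GG n, eChar n (epsPair a c) = if c = 0 then (n : ℂ) * n else 0 := by
  obtain ⟨c1, c2⟩ := c
  rw [Fintype.sum_prod_type]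
  have h : ∀ x y : ZMod n, eChar n (epsPair (x, y) (c1, c2))
      = eChar n (x * c2) * eChar n (y * (-c1)) := by
    intro x y
    rw [← eChar_add]
    congr 1
    simp [epsPair]
    ring
  simp_rw [h, ← Finset.sum_mul_sum, eChar_sum]
  by_cases h2 : c2 = 0 <;> by_cases h1 : c1 = 0 <;>
    simp [h1, h2, Prod.ext_iff]

/-- The partition function of the trivially gapped phase with ℤ_n×ℤ_n Dirichlet b.c. -/
noncomputable def Dfun (n : ℕ) : GG n × GG n → ℂ :=
  fun P => if P.1 = 0 ∧ P.2 = 0 then (n : ℂ) * n else 0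

lemma gcollapse (n : ℕ) [NeZero n] (f : GG n → ℂ) (u v : ZMod n) (huv : u * v = 1)
    (B : GG n) :
    (∑ b : GG n, if u • b + B = 0 then f b else 0) = f (-(v • B)) := by
  have hiff : ∀ b : GG n, u • b + B = 0 ↔ b = -(v • B) := by
    intro b
    constructor
    · intro h
      have h2 : v • (u • b + B) = v • (0 : GG n) := by rw [h]
      rw [smul_add, smul_smul, mul_comm v u, huv, one_smul, smul_zero] at h2
      exact eq_neg_of_add_eq_zero_left h2
    · rintro rfl
      rw [smul_neg, smul_smul, huv, one_smul, neg_add_cancel]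
  simp_rw [hiff]
  simp

lemma S_Z (n : ℕ) [NeZero n] (m : ZMod n) :
    gaugeS n (Zspt n m) = fun P =>
      ∑ b : GG n, if m • b + P.2 = 0 then eChar n (epsPair b P.1) else 0 := by
  funext P
  obtain ⟨A, B⟩ := P
  show (n : ℂ)⁻¹ * (n : ℂ)⁻¹ *
      ∑ a : GG n, ∑ b : GG n, eChar n (m * epsPair a b) * eChar n (epsPair a B + epsPair b A)
    = _
  have step : ∀ a b : GG n,
      eChar n (m * epsPair a b) * eChar n (epsPair a B + epsPair b A)
      = eChar n (epsPair a (m • b + B)) * eChar n (epsPair b A) := by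
    intro a b
    rw [← eChar_add, ← eChar_add]
    congr 1
    obtain ⟨a1, a2⟩ := a; obtain ⟨b1, b2⟩ := b; obtain ⟨B1, B2⟩ := B
    simp [epsPair, Prod.smul_mk, smul_eq_mul, Prod.mk_add_mk]
    ring
  simp_rw [step]
  rw [Finset.sum_comm]
  simp_rw [← Finset.sum_mul, eCharG_sum, ite_mul, zero_mul, ← mul_ite_zero]
  rw [← Finset.mul_sum]
  have hn : (n : ℂ) ≠ 0 := Nat.cast_ne_zero.mpr (NeZero.ne n)
  field_simp

lemma S_unit (n : ℕ) [NeZero n] (u v : ZMod n) (huv : u * v = 1) :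
    gaugeS n (Zspt n u) = Zspt n v := by
  rw [S_Z]
  funext P
  rw [gcollapse n _ u v huv]
  show eChar n (epsPair (-(v • P.2)) P.1) = eChar n (v * epsPair P.1 P.2)
  congr 1
  obtain ⟨⟨A1, A2⟩, ⟨B1, B2⟩⟩ := P
  simp [epsPair, Prod.smul_mk, smul_eq_mul]
  ring

lemma S_zero (n : ℕ) [NeZero n] : gaugeS n (Zspt n 0) = Dfun n := by
  rw [S_Z]
  funext P
  simp only [zero_smul, zero_add, Dfun]
  rcases eq_or_ne P.2 0 with hB | hB
  · simp [hB, eCharG_sum]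
  · simp [hB]

lemma S_D (n : ℕ) [NeZero n] : gaugeS n (Dfun n) = Zspt n 0 := by
  funext P
  obtain ⟨A, B⟩ := P
  show (n : ℂ)⁻¹ * (n : ℂ)⁻¹ * ∑ a : GG n, ∑ b : GG n,
      (if a = 0 ∧ b = 0 then (n : ℂ) * n else 0) * eChar n (epsPair a B + epsPair b A) = _
  have step : ∀ a b : GG n,
      (if a = 0 ∧ b = 0 then (n : ℂ) * n else 0) * eChar n (epsPair a B + epsPair b A)
      = if b = 0 then (if a = 0 then ((n : ℂ) * n) * eChar n (epsPair a B + epsPair b A) else 0) else 0 := by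
    intro a b
    split_ifs with h1 h2 h3 <;> simp_all
  simp_rw [step, Finset.sum_ite_eq' Finset.univ (0 : GG n), Finset.mem_univ, if_true]
  rw [Finset.sum_ite_eq' Finset.univ (0 : GG n)
    (fun x => ((n : ℂ) * n) * eChar n (epsPair x B + epsPair 0 A))]
  simp only [Finset.mem_univ, if_true]
  have hn : (n : ℂ) ≠ 0 := Nat.cast_ne_zero.mpr (NeZero.ne n)
  have he : epsPair (0 : GG n) B + epsPair (0 : GG n) A = 0 := by simp [epsPair]
  rw [he, eChar_zero]
  show _ = eChar n (0 * epsPair A B)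
  rw [zero_mul, eChar_zero]
  field_simp

lemma T_Z (n : ℕ) [NeZero n] (m : ZMod n) : stackT n (Zspt n m) = Zspt n (m + 1) := by
  funext P
  show eChar n (m * epsPair P.1 P.2) * eChar n (epsPair P.1 P.2) = _
  rw [← eChar_add]
  show _ = eChar n ((m + 1) * epsPair P.1 P.2)
  congr 1
  ring

lemma Tinv_Z (n : ℕ) [NeZero n] (m : ZMod n) : stackTinv n (Zspt n m) = Zspt n (m - 1) := by
  funext P
  show eChar n (m * epsPair P.1 P.2) * eChar n (-(epsPair P.1 P.2)) = _
  rw [← eChar_add]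
  show _ = eChar n ((m - 1) * epsPair P.1 P.2)
  congr 1
  ring

lemma Tinv_D (n : ℕ) [NeZero n] : stackTinv n (Dfun n) = Dfun n := by
  funext P
  show Dfun n P * eChar n (-(epsPair P.1 P.2)) = Dfun n P
  unfold Dfun
  by_cases h : P.1 = 0 ∧ P.2 = 0
  · simp [h, h.1, h.2, epsPair, eChar_zero]
  · simp [h]

lemma middle (n : ℕ) [NeZero n] (d v : ZMod n) (hdv : d * v = 1) :
    gaugeS n (stackT n (gaugeS n (Zspt n (v - 1)))) = Zspt n (1 - d) := by
  rw [S_Z]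
  funext P
  obtain ⟨A, B⟩ := P
  show (n : ℂ)⁻¹ * (n : ℂ)⁻¹ * ∑ a : GG n, ∑ c : GG n,
      ((∑ b : GG n, if (v - 1) • b + c = 0 then eChar n (epsPair b a) else 0)
        * eChar n (epsPair a c)) * eChar n (epsPair a B + epsPair c A) = _
  have step1 : ∀ a c : GG n,
      ((∑ b : GG n, if (v - 1) • b + c = 0 then eChar n (epsPair b a) else 0)
        * eChar n (epsPair a c)) * eChar n (epsPair a B + epsPair c A)
      = ∑ b : GG n, if c = -((v - 1) • b) then
          eChar n (epsPair b a) * eChar n (epsPair a c) * eChar n (epsPair a B + epsPair c A)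
          else 0 := by
    intro a c
    rw [Finset.sum_mul, Finset.sum_mul]
    refine Finset.sum_congr rfl fun b _ => ?_
    have hc : (v - 1) • b + c = 0 ↔ c = -((v - 1) • b) := by
      rw [add_comm, add_eq_zero_iff_eq_neg]
    rw [ite_mul, ite_mul, zero_mul, zero_mul]
    simp_rw [hc]
  simp_rw [step1]
  have step2 : ∀ a : GG n, ∑ c : GG n, ∑ b : GG n, (if c = -((v - 1) • b) then
          eChar n (epsPair b a) * eChar n (epsPair a c) * eChar n (epsPair a B + epsPair c A)
          else 0)
      = ∑ b : GG n, eChar n (epsPair a ((-v) • b + B)) * eChar n (epsPair ((1 - v) • b) A) := by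
    intro a
    rw [Finset.sum_comm]
    refine Finset.sum_congr rfl fun b _ => ?_
    rw [Finset.sum_ite_eq' Finset.univ (-((v - 1) • b))]
    simp only [Finset.mem_univ, if_true]
    rw [← eChar_add, ← eChar_add, ← eChar_add]
    congr 1
    obtain ⟨a1, a2⟩ := a; obtain ⟨b1, b2⟩ := b; obtain ⟨B1, B2⟩ := B; obtain ⟨A1, A2⟩ := A
    simp [epsPair, Prod.smul_mk, smul_eq_mul, Prod.mk_add_mk, Prod.neg_mk]
    ring
  simp_rw [step2]
  rw [Finset.sum_comm]
  simp_rw [← Finset.sum_mul, eCharG_sum, ite_mul, zero_mul, ← mul_ite_zero]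
  rw [← Finset.mul_sum]
  have hvd : (-v) * (-d) = 1 := by rw [neg_mul_neg, mul_comm]; exact hdv
  rw [gcollapse n (fun b => eChar n (epsPair ((1 - v) • b) A)) (-v) (-d) hvd B]
  have hn : (n : ℂ) ≠ 0 := Nat.cast_ne_zero.mpr (NeZero.ne n)
  have harg : epsPair ((1 - v) • (-((-d) • B))) A = (1 - d) * epsPair A B := by
    have h1 : v * d = 1 := by rw [mul_comm]; exact hdv
    obtain ⟨B1, B2⟩ := B; obtain ⟨A1, A2⟩ := A
    simp only [epsPair, Prod.smul_mk, smul_eq_mul, Prod.neg_mk, Prod.fst, Prod.snd]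
    linear_combination (B2 * A1 - B1 * A2) * h1
  rw [harg]
  show _ = eChar n ((1 - d) * epsPair A B)
  field_simp

lemma iterT_Z (n : ℕ) [NeZero n] (j : ℕ) (m : ZMod n) :
    (stackT n)^[j] (Zspt n m) = Zspt n (m + j) := by
  induction j with
  | zero => simp
  | succ j ih =>
      rw [Function.iterate_succ_apply', ih, T_Z]
      congr 1
      push_cast
      ring

lemma manip_iter (n : ℕ) [NeZero n] (j : ℕ) {F} (h : IsManip n F) :
    IsManip n ((stackT n)^[j] ∘ F) := by
  induction j with
  | zero => simpa using h
  | succ j ih =>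
      rw [Function.iterate_succ']
      exact ih.comp_T


/-- for `k, k' : ZMod n` with `k - k'` a unit of `ZMod n`, there
is a topological manipulation `F`, a finite composition of `S`, `T` and `T⁻¹`,
exchanging the level-`k` and level-`k'` ℤ_n×ℤ_n SPT phases: two SPT phases
whose levels differ by an integer coprime to `n` are exchanged by a duality
operation built from gauging and SPT stacking. -/
theorem duality_between_SPTs_coprime_difference (n : ℕ) [NeZero n]
    (k k' : ZMod n) (hkk' : IsUnit (k - k')) :
    ∃ F : (GG n × GG n → ℂ) → (GG n × GG n → ℂ),
      IsManip n F ∧ F (Zspt n k) = Zspt n k' ∧ F (Zspt n k') = Zspt n k := by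
  have hd : IsUnit (k' - k) := by
    have := hkk'.neg
    rwa [neg_sub] at this
  obtain ⟨u, hu⟩ := hd
  set d : ZMod n := k' - k with hd_def
  set v : ZMod n := ((u⁻¹ : (ZMod n)ˣ) : ZMod n) with hv_def
  have hdv : d * v = 1 := by
    rw [← hu, hv_def, ← Units.val_mul, mul_inv_cancel, Units.val_one]
  have hcast : ∀ a : ZMod n, ((a.val : ℕ) : ZMod n) = a := by
    intro a; simp [ZMod.natCast_val, ZMod.cast_id]
  refine ⟨(stackT n)^[k.val] ∘ ((stackT n)^[(d - 1).val] ∘ (gaugeS n ∘ (stackT n ∘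
      (gaugeS n ∘ (stackTinv n ∘ (gaugeS n ∘ (stackT n)^[(-k).val])))))), ?_, ?_, ?_⟩
  · exact manip_iter n _ (manip_iter n _
      ((((((manip_iter n _ IsManip.id).comp_S).comp_Tinv).comp_S).comp_T).comp_S))
  · show (stackT n)^[k.val] ((stackT n)^[(d - 1).val] (gaugeS n (stackT n
      (gaugeS n (stackTinv n (gaugeS n ((stackT n)^[(-k).val] (Zspt n k)))))))) = _
    rw [iterT_Z, hcast]
    have h0 : k + -k = 0 := by ring
    rw [h0, S_zero, Tinv_D, S_D, T_Z, zero_add, S_unit n 1 1 (one_mul 1), iterT_Z, hcast,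
      iterT_Z, hcast]
    congr 1
    rw [hd_def]; ring
  · show (stackT n)^[k.val] ((stackT n)^[(d - 1).val] (gaugeS n (stackT n
      (gaugeS n (stackTinv n (gaugeS n ((stackT n)^[(-k).val] (Zspt n k')))))))) = _
    rw [iterT_Z, hcast]
    have h0 : k' + -k = d := by rw [hd_def]; ring
    rw [h0, S_unit n d v hdv, Tinv_Z, middle n d v hdv, iterT_Z, hcast, iterT_Z, hcast]
    congr 1
    rw [hd_def]; ring

end
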